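/- Let f be a bounded measurable function on a neighborhood of the cube K̂ = {a : ‖a - x‖_∞ ≤ δ} ⊂ ℝ^d, monotone with respect to the coordinatewise order. For ε > 0 define the measure ρ_ε = ε^{-1}(f(· + ε·1) - f(·)) dμ on K̂. Then the total variation of ρ_ε is bounded uniformly in ε: |ρ_ε|(K̂) ≤ C · max(|f(x + (ε+δ)·1)|, |f(x - δ·1)|) · δ^{d-1} for a constant C depending only on d. -/

import Mathlib

open MeasureTheory
open Set

lemma aux_pow_sub (a b : ℝ) (hb : 0 ≤ b) (hba : b ≤ a) :
    ∀ n : ℕ, a ^ n - b ^ n ≤ n * a ^ (n - 1) * (a - b) := by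
  have ha : 0 ≤ a := hb.trans hba
  intro n
  induction n with
  | zero => simp
  | succ n ih =>
    rcases Nat.eq_zero_or_pos n with rfl | hn
    · simp
    · have h1 : a * a ^ (n - 1) = a ^ n := by
        rw [← pow_succ']; congr 1; omega
      have h2 : b ^ n ≤ a ^ n := pow_le_pow_left₀ hb hba n
      calc a ^ (n+1) - b ^ (n+1) = a * (a ^ n - b ^ n) + (a - b) * b ^ n := by ring
        _ ≤ a * (n * a ^ (n-1) * (a - b)) + (a - b) * a ^ n := by
            refine add_le_add (mul_le_mul_of_nonneg_left ih ha)
              (mul_le_mul_of_nonneg_left h2 (by linarith))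
        _ = (n * (a * a ^ (n-1)) + a ^ n) * (a - b) := by ring
        _ = ((n+1 : ℕ) : ℝ) * a ^ ((n+1) - 1) * (a - b) := by
            rw [h1, Nat.add_sub_cancel]; push_cast; ring


theorem stmt6 (d : ℕ) :
    ∃ C : ℝ, 0 < C ∧
      ∀ (U : Set (Fin d → ℝ)) (_ : IsOpen U) (x : Fin d → ℝ) (δ ε : ℝ), 0 < δ → 0 < ε →
        Metric.closedBall x (δ + ε) ⊆ U →
        ∀ f : (Fin d → ℝ) → ℝ, Measurable f → (∃ M, ∀ y ∈ U, |f y| ≤ M) →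
          (∀ a ∈ U, ∀ b ∈ U, a ≤ b → f a ≤ f b) →
          (∫ y in Metric.closedBall x δ,
              |f (y + ε • (1 : Fin d → ℝ)) - f y| / ε) ≤
            C * max |f (x + (ε + δ) • (1 : Fin d → ℝ))| |f (x - δ • (1 : Fin d → ℝ))| *
              δ ^ (d - 1) := by
  refine ⟨d * 2 ^ d + 1, by positivity, ?_⟩
  intro U hU x δ ε hδ hε hsub f hmeas hbdd hmono
  set M₀ : ℝ := max |f (x + (ε + δ) • (1 : Fin d → ℝ))| |f (x - δ • (1 : Fin d → ℝ))| with hM₀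
  have hM₀0 : 0 ≤ M₀ := le_trans (abs_nonneg _) (le_max_left _ _)
  rcases Nat.eq_zero_or_pos d with rfl | hd
  · have h1 : (1 : Fin 0 → ℝ) = 0 := Subsingleton.elim _ _
    rw [h1]
    simp only [smul_zero, add_zero, sub_self, abs_zero, zero_div, integral_zero]
    positivity
  -- d ≥ 1
  set c : Fin d → ℝ := ε • (1 : Fin d → ℝ) with hc
  have hci : ∀ i, c i = ε := fun i => by simp [hc]
  -- cubes as products of intervals
  set K : Set (Fin d → ℝ) := Metric.closedBall x δ with hK
  set K' : Set (Fin d → ℝ) := Set.pi univ fun i => Icc (x i - δ + ε) (x i + δ + ε) with hK'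
  have hKpi : K = Set.pi univ fun i => Icc (x i - δ) (x i + δ) := by
    rw [hK, closedBall_pi _ hδ.le]; simp only [Real.closedBall_eq_Icc]
  have hKcpi : Metric.closedBall x (δ + ε) =
      Set.pi univ fun i => Icc (x i - (δ + ε)) (x i + (δ + ε)) := by
    rw [closedBall_pi _ (by linarith)]; simp only [Real.closedBall_eq_Icc]
  have measK : MeasurableSet K := Metric.isClosed_closedBall.measurableSet
  have measK' : MeasurableSet K' :=
    MeasurableSet.univ_pi fun i => measurableSet_Icc
  -- membership in U
  have hKU : K ⊆ U := (Metric.closedBall_subset_closedBall (by linarith)).trans hsub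
  have hK'U : K' ⊆ U := by
    refine subset_trans ?_ hsub
    rw [hKcpi, hK']
    refine Set.pi_mono fun i _ => ?_
    exact Icc_subset_Icc (by linarith) (by linarith)
  have hshift : ∀ y ∈ K, y + c ∈ K' := by
    intro y hy i
    intro _
    have := (hKpi ▸ hy) i (mem_univ i)
    simp only [mem_Icc] at this ⊢
    have hcc : (y + c) i = y i + ε := by simp [hci]
    rw [hcc]
    constructor <;> linarith [this.1, this.2]
  -- pointwise bound |f| ≤ M₀ on K ∪ K'
  have hp : x + (ε + δ) • (1 : Fin d → ℝ) ∈ U := by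
    apply hsub; rw [hKcpi]; intro i _
    simp only [Pi.add_apply, Pi.smul_apply, Pi.one_apply, smul_eq_mul, mul_one, mem_Icc]
    constructor <;> linarith
  have hq : x - δ • (1 : Fin d → ℝ) ∈ U := by
    apply hsub; rw [hKcpi]; intro i _
    simp only [Pi.sub_apply, Pi.smul_apply, Pi.one_apply, smul_eq_mul, mul_one, mem_Icc]
    constructor <;> linarith
  have hbound : ∀ y ∈ K ∪ K', |f y| ≤ M₀ := by
    rintro y (hy | hy)
    all_goals {
      have hmem : ∀ i, x i - δ ≤ y i ∧ y i ≤ x i + δ + ε := by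
        intro i
        first
        | · have := (hKpi ▸ hy) i (mem_univ i)
            simp only [mem_Icc] at this
            exact ⟨this.1, by linarith [this.2]⟩
        | · have := (hK' ▸ hy) i (mem_univ i)
            simp only [mem_Icc] at this
            exact ⟨by linarith [this.1], by linarith [this.2]⟩
      have hyU : y ∈ U := by first | exact hKU hy | exact hK'U hy
      have hle1 : f y ≤ f (x + (ε + δ) • (1 : Fin d → ℝ)) := by
        apply hmono y hyU _ hp
        intro i
        simp only [Pi.add_apply, Pi.smul_apply, Pi.one_apply, smul_eq_mul, mul_one]
        linarith [(hmem i).2]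
      have hle2 : f (x - δ • (1 : Fin d → ℝ)) ≤ f y := by
        apply hmono _ hq y hyU
        intro i
        simp only [Pi.sub_apply, Pi.smul_apply, Pi.one_apply, smul_eq_mul, mul_one]
        linarith [(hmem i).1]
      rw [abs_le]
      constructor
      · calc -M₀ ≤ -|f (x - δ • (1 : Fin d → ℝ))| := neg_le_neg (le_max_right _ _)
          _ ≤ f (x - δ • (1 : Fin d → ℝ)) := neg_abs_le _
          _ ≤ f y := hle2
      · calc f y ≤ f (x + (ε + δ) • (1 : Fin d → ℝ)) := hle1
          _ ≤ |f (x + (ε + δ) • (1 : Fin d → ℝ))| := le_abs_self _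
          _ ≤ M₀ := le_max_left _ _ }
  -- volumes
  have volK : volume K = ENNReal.ofReal ((2*δ)^d) := by
    rw [hKpi, volume_pi_pi]
    simp only [Real.volume_Icc]
    rw [Finset.prod_congr rfl (fun i _ => by ring_nf : ∀ i ∈ Finset.univ,
      ENNReal.ofReal (x i + δ - (x i - δ)) = ENNReal.ofReal (2*δ)),
      Finset.prod_const, Finset.card_univ, Fintype.card_fin,
      ← ENNReal.ofReal_pow (by linarith)]
  have volK' : volume K' = ENNReal.ofReal ((2*δ)^d) := by
    rw [hK', volume_pi_pi]
    simp only [Real.volume_Icc]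
    rw [Finset.prod_congr rfl (fun i _ => by ring_nf : ∀ i ∈ Finset.univ,
      ENNReal.ofReal (x i + δ + ε - (x i - δ + ε)) = ENNReal.ofReal (2*δ)),
      Finset.prod_const, Finset.card_univ, Fintype.card_fin,
      ← ENNReal.ofReal_pow (by linarith)]
  set b : ℝ := max (2*δ - ε) 0 with hbdef
  have hb0 : 0 ≤ b := le_max_right _ _
  have hb2δ : b ≤ 2*δ := max_le (by linarith) (by linarith)
  have hbε : 2*δ - b ≤ ε := by
    rcases le_total (2*δ - ε) 0 with h | h
    · rw [hbdef, max_eq_right h]; linarith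
    · rw [hbdef, max_eq_left h]; linarith
  have volInter : volume (K ∩ K') = ENNReal.ofReal (b^d) := by
    rw [hKpi, hK', ← Set.pi_inter_distrib, volume_pi_pi]
    have : ∀ i, Icc (x i - δ) (x i + δ) ∩ Icc (x i - δ + ε) (x i + δ + ε)
        = Icc (x i - δ + ε) (x i + δ) := by
      intro i
      have h1 : max (x i - δ) (x i - δ + ε) = x i - δ + ε := max_eq_right (by linarith)
      have h2 : min (x i + δ) (x i + δ + ε) = x i + δ := min_eq_left (by linarith)
      rw [Icc_inter_Icc, h1, h2]
    simp only [this, Real.volume_Icc]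
    have h2 : ∀ i : Fin d, ENNReal.ofReal (x i + δ - (x i - δ + ε)) = ENNReal.ofReal b := by
      intro i
      rcases le_total (2*δ - ε) 0 with h | h
      · rw [hbdef, max_eq_right h, ENNReal.ofReal_eq_zero.2 (by linarith), ENNReal.ofReal_zero]
      · rw [hbdef, max_eq_left h]; congr 1; ring
    rw [Finset.prod_congr rfl (fun i _ => h2 i), Finset.prod_const, Finset.card_univ,
      Fintype.card_fin, ← ENNReal.ofReal_pow hb0]
  have volKne : volume K ≠ ⊤ := by rw [volK]; exact ENNReal.ofReal_ne_top
  have volK'ne : volume K' ≠ ⊤ := by rw [volK']; exact ENNReal.ofReal_ne_top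
  have hABr : b ^ d ≤ (2*δ) ^ d := pow_le_pow_left₀ hb0 hb2δ d
  have hdiffbd : (2*δ)^d - b^d ≤ d * (2*δ)^(d-1) * ε := by
    calc (2*δ)^d - b^d ≤ d * (2*δ)^(d-1) * (2*δ - b) := aux_pow_sub _ _ hb0 hb2δ d
      _ ≤ d * (2*δ)^(d-1) * ε := by
          apply mul_le_mul_of_nonneg_left hbε
          positivity
  have volDiff1 : volume (K' \ K) = ENNReal.ofReal ((2*δ)^d - b^d) := by
    have h1 : K' \ K = K' \ (K' ∩ K) := by rw [diff_self_inter]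
    rw [h1, measure_diff inter_subset_left ((measK'.inter measK).nullMeasurableSet)
      (ne_top_of_le_ne_top volK'ne (measure_mono inter_subset_left)),
      inter_comm, volInter, volK', ENNReal.ofReal_sub _ (by positivity)]
  have volDiff2 : volume (K \ K') = ENNReal.ofReal ((2*δ)^d - b^d) := by
    have h1 : K \ K' = K \ (K ∩ K') := by rw [diff_self_inter]
    rw [h1, measure_diff inter_subset_left ((measK.inter measK').nullMeasurableSet)
      (ne_top_of_le_ne_top volKne (measure_mono inter_subset_left)),
      volInter, volK, ENNReal.ofReal_sub _ (by positivity)]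
  -- integrability
  have intK : IntegrableOn f K := by
    refine Integrable.mono' ((integrableOn_const_iff (C := M₀)).2 (Or.inr (lt_top_iff_ne_top.2 volKne)))
      hmeas.aestronglyMeasurable.restrict ?_
    filter_upwards [ae_restrict_mem measK] with y hy
    exact hbound y (Or.inl hy)
  have intK' : IntegrableOn f K' := by
    refine Integrable.mono' ((integrableOn_const_iff (C := M₀)).2 (Or.inr (lt_top_iff_ne_top.2 volK'ne)))
      hmeas.aestronglyMeasurable.restrict ?_
    filter_upwards [ae_restrict_mem measK'] with y hy
    exact hbound y (Or.inr hy)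
  have intshift : IntegrableOn (fun y => f (y + c)) K := by
    refine Integrable.mono' ((integrableOn_const_iff (C := M₀)).2 (Or.inr (lt_top_iff_ne_top.2 volKne)))
      ((hmeas.comp (measurable_id.add_const c)).aestronglyMeasurable.restrict) ?_
    filter_upwards [ae_restrict_mem measK] with y hy
    exact hbound _ (Or.inr (hshift y hy))
  -- change of variables
  have hKiff : ∀ y, y ∈ K ↔ y + c ∈ K' := by
    intro y
    rw [hKpi, hK']
    simp only [Set.mem_univ_pi, mem_Icc, Pi.add_apply]
    constructor <;> intro h i <;> (have := h i; rw [hci i] at *; constructor <;> [linarith [this.1]; linarith [this.2]])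
  have cov : ∫ y in K, f (y + c) = ∫ y in K', f y := by
    rw [← integral_indicator measK, ← integral_indicator measK']
    have heq : ∀ y, K.indicator (fun z => f (z + c)) y = (K'.indicator f) (y + c) := by
      intro y
      by_cases hy : y ∈ K
      · rw [indicator_of_mem hy, indicator_of_mem ((hKiff y).1 hy)]
      · rw [indicator_of_notMem hy, indicator_of_notMem (fun h => hy ((hKiff y).2 h))]
    simp_rw [heq]
    exact integral_add_right_eq_self (K'.indicator f) c
  -- nonnegativity of the increment
  have hnn : ∀ y ∈ K, 0 ≤ f (y + c) - f y := by
    intro y hy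
    have h1 : y ∈ U := hKU hy
    have h2 : y + c ∈ U := hK'U (hshift y hy)
    have hle : y ≤ y + c := by
      intro i
      simp only [Pi.add_apply, hci]
      linarith
    linarith [hmono y h1 (y + c) h2 hle]
  have habs : (∫ y in K, |f (y + c) - f y| / ε) = (∫ y in K, (f (y + c) - f y)) / ε := by
    rw [integral_div]
    congr 1
    refine setIntegral_congr_fun measK ?_
    intro y hy
    exact abs_of_nonneg (hnn y hy)
  have hsubint : (∫ y in K, (f (y + c) - f y)) = (∫ y in K', f y) - ∫ y in K, f y := by
    rw [integral_sub intshift intK, cov]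
  have split : (∫ y in K', f y) - ∫ y in K, f y
      = (∫ y in (K' \ K), f y) - ∫ y in (K \ K'), f y := by
    have e1 := integral_inter_add_diff (μ := volume) (s := K') (t := K) measK intK'
    have e2 := integral_inter_add_diff (μ := volume) (s := K) (t := K') measK' intK
    rw [← e1, ← e2, inter_comm]
    ring
  have vt1 : (volume (K' \ K)).toReal ≤ d * (2*δ)^(d-1) * ε := by
    rw [volDiff1, ENNReal.toReal_ofReal (by linarith)]
    exact hdiffbd
  have vt2 : (volume (K \ K')).toReal ≤ d * (2*δ)^(d-1) * ε := by
    rw [volDiff2, ENNReal.toReal_ofReal (by linarith)]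
    exact hdiffbd
  have bd1 : |∫ y in (K' \ K), f y| ≤ M₀ * (d * (2*δ)^(d-1) * ε) := by
    calc |∫ y in (K' \ K), f y| ≤ M₀ * (volume (K' \ K)).toReal := by
          rw [← Real.norm_eq_abs]
          exact norm_setIntegral_le_of_norm_le_const
            ((measure_mono diff_subset).trans_lt (lt_top_iff_ne_top.2 volK'ne))
            (fun y hy => by rw [Real.norm_eq_abs]; exact hbound y (Or.inr hy.1))
      _ ≤ M₀ * (d * (2*δ)^(d-1) * ε) := mul_le_mul_of_nonneg_left vt1 hM₀0
  have bd2 : |∫ y in (K \ K'), f y| ≤ M₀ * (d * (2*δ)^(d-1) * ε) := by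
    calc |∫ y in (K \ K'), f y| ≤ M₀ * (volume (K \ K')).toReal := by
          rw [← Real.norm_eq_abs]
          exact norm_setIntegral_le_of_norm_le_const
            ((measure_mono diff_subset).trans_lt (lt_top_iff_ne_top.2 volKne))
            (fun y hy => by rw [Real.norm_eq_abs]; exact hbound y (Or.inl hy.1))
      _ ≤ M₀ * (d * (2*δ)^(d-1) * ε) := mul_le_mul_of_nonneg_left vt2 hM₀0
  rw [habs, hsubint, split]
  have key : (∫ y in (K' \ K), f y) - ∫ y in (K \ K'), f y
      ≤ 2 * M₀ * (d * (2*δ)^(d-1)) * ε := by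
    have b1 := abs_le.1 bd1
    have b2 := abs_le.1 bd2
    nlinarith [b1.2, b2.1]
  have step1 : ((∫ y in (K' \ K), f y) - ∫ y in (K \ K'), f y) / ε
      ≤ 2 * M₀ * (d * (2*δ)^(d-1)) := by
    rw [div_le_iff₀ hε]
    exact key
  refine le_trans step1 ?_
  have h2d : (2*δ)^(d-1) = 2^(d-1) * δ^(d-1) := mul_pow _ _ _
  have h2 : 2 * (2:ℝ)^(d-1) = 2^d := by
    rw [← pow_succ']
    congr 1
    omega
  calc 2 * M₀ * (d * (2*δ)^(d-1)) = ((d : ℝ) * 2^d) * (M₀ * δ^(d-1)) := by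
        rw [h2d, ← h2]; ring
    _ ≤ ((d : ℝ) * 2^d + 1) * (M₀ * δ^(d-1)) := by
        refine mul_le_mul_of_nonneg_right (by linarith) (by positivity)
    _ = ((d : ℝ) * 2^d + 1) * M₀ * δ^(d-1) := by ring
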